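/- If u dominates v in G (u adjacent to v and N[v] ⊆ N[u]), then the minimum vertex cover size of G equals 1 plus the minimum vertex cover size of G - u (the graph with vertex u and its incident edges removed). -/
import Mathlib


open SimpleGraph

/-- The vertex cover number: the minimum size of a set of vertices meeting every edge. -/
noncomputable def tau {W : Type*} [Fintype W] (G : SimpleGraph W) : ℕ :=
  sInf {k | ∃ S : Finset W, S.card = k ∧ ∀ ⦃a b : W⦄, G.Adj a b → a ∈ S ∨ b ∈ S}

lemma tau_exists {W : Type*} [Fintype W] (G : SimpleGraph W) :
    ∃ S : Finset W, S.card = tau G ∧ ∀ ⦃a b : W⦄, G.Adj a b → a ∈ S ∨ b ∈ S := by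
  have hne : {k | ∃ S : Finset W, S.card = k ∧
      ∀ ⦃a b : W⦄, G.Adj a b → a ∈ S ∨ b ∈ S}.Nonempty :=
    ⟨Finset.univ.card, Finset.univ, rfl, fun a b _ => Or.inl (Finset.mem_univ a)⟩
  exact Nat.sInf_mem hne

lemma tau_le {W : Type*} [Fintype W] (G : SimpleGraph W) (S : Finset W)
    (hS : ∀ ⦃a b : W⦄, G.Adj a b → a ∈ S ∨ b ∈ S) : tau G ≤ S.card :=
  Nat.sInf_le ⟨S, rfl, hS⟩

/-- If `u` dominates `v` (they are adjacent and `N[v] ⊆ N[u]`), then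
`τ(G) = 1 + τ(G - u)`. -/
theorem stmt7 {V : Type*} [Fintype V] [DecidableEq V] (G : SimpleGraph V) (u v : V)
    (huv : G.Adj u v)
    (hdom : insert v (G.neighborSet v) ⊆ insert u (G.neighborSet u)) :
    tau G = 1 + tau (G.induce {w : V | w ≠ u}) := by
  obtain ⟨S, hScard, hScov⟩ := tau_exists G
  -- Build a minimum cover containing u
  obtain ⟨S₀, h0card, hu0, hcov0⟩ :
      ∃ S₀ : Finset V, S₀.card = tau G ∧ u ∈ S₀ ∧
        ∀ ⦃a b : V⦄, G.Adj a b → a ∈ S₀ ∨ b ∈ S₀ := by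
    by_cases hu : u ∈ S
    · exact ⟨S, hScard, hu, hScov⟩
    · have hnbr : ∀ w, G.Adj u w → w ∈ S := fun w hw => (hScov hw).resolve_left hu
      have hv : v ∈ S := hnbr v huv
      have hpos : 1 ≤ S.card := Finset.card_pos.mpr ⟨v, hv⟩
      have key : ∀ a b : V, G.Adj a b → a ∈ S →
          a ∈ insert u (S.erase v) ∨ b ∈ insert u (S.erase v) := by
        intro a b hab haS
        by_cases hav : a = v
        · subst hav
          have hb : b ∈ insert u (G.neighborSet u) :=
            hdom (Set.mem_insert_of_mem _ (by exact hab))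
          rcases hb with hb | hb
          · exact Or.inr (by rw [hb]; exact Finset.mem_insert_self u _)
          · exact Or.inr (Finset.mem_insert_of_mem
              (Finset.mem_erase.mpr ⟨hab.ne', hnbr b hb⟩))
        · exact Or.inl (Finset.mem_insert_of_mem (Finset.mem_erase.mpr ⟨hav, haS⟩))
      refine ⟨insert u (S.erase v), ?_, Finset.mem_insert_self u _, ?_⟩
      · rw [Finset.card_insert_of_notMem (fun h => hu (Finset.mem_of_mem_erase h)),
          Finset.card_erase_of_mem hv]
        omega
      · intro a b hab
        rcases hScov hab with h | h
        · exact key a b hab h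
        · exact (key b a hab.symm h).symm
  -- τ(G') ≤ τ(G) - 1
  set G' := G.induce {w : V | w ≠ u} with hG'
  have hτpos : 1 ≤ tau G := h0card ▸ Finset.card_pos.mpr ⟨u, hu0⟩
  have hle1 : tau G' ≤ tau G - 1 := by
    have hcov : ∀ ⦃a b : {w : V | w ≠ u}⦄, G'.Adj a b →
        a ∈ (S₀.erase u).subtype (· ≠ u) ∨ b ∈ (S₀.erase u).subtype (· ≠ u) := by
      intro a b hab
      have hab' : G.Adj (a : V) (b : V) := hab
      rcases hcov0 hab' with h | h
      · exact Or.inl (Finset.mem_subtype.mpr (Finset.mem_erase.mpr ⟨a.2, h⟩))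
      · exact Or.inr (Finset.mem_subtype.mpr (Finset.mem_erase.mpr ⟨b.2, h⟩))
    have hcard : ((S₀.erase u).subtype (· ≠ u)).card = tau G - 1 := by
      rw [Finset.card_subtype, Finset.filter_true_of_mem
        (fun x hx => (Finset.mem_erase.mp hx).1), Finset.card_erase_of_mem hu0, h0card]
    calc tau G' ≤ _ := tau_le G' _ hcov
      _ = tau G - 1 := hcard
  -- τ(G) ≤ 1 + τ(G')
  obtain ⟨S', hS'card, hS'cov⟩ := tau_exists G'
  have hle2 : tau G ≤ 1 + tau G' := by
    have hucov : u ∉ S'.image Subtype.val := by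
      simp only [Finset.mem_image]
      rintro ⟨x, -, hx⟩
      exact x.2 hx
    have hcov : ∀ ⦃a b : V⦄, G.Adj a b →
        a ∈ insert u (S'.image Subtype.val) ∨ b ∈ insert u (S'.image Subtype.val) := by
      intro a b hab
      by_cases ha : a = u
      · exact Or.inl (by rw [ha]; exact Finset.mem_insert_self u _)
      by_cases hb : b = u
      · exact Or.inr (by rw [hb]; exact Finset.mem_insert_self u _)
      have hab' : G'.Adj ⟨a, ha⟩ ⟨b, hb⟩ := hab
      rcases hS'cov hab' with h | h
      · exact Or.inl (Finset.mem_insert_of_mem (Finset.mem_image.mpr ⟨_, h, rfl⟩))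
      · exact Or.inr (Finset.mem_insert_of_mem (Finset.mem_image.mpr ⟨_, h, rfl⟩))
    have := tau_le G _ hcov
    rwa [Finset.card_insert_of_notMem hucov,
      Finset.card_image_of_injective _ Subtype.val_injective, hS'card, add_comm] at this
  omega
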